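/- Let K > 0, C, A, B, a₁, a₂ be real constants with A and B not both zero, set ε* := 2π e^C/(A² + B²), and let Φ : ℝ → ℝ be a twice continuously differentiable function satisfying Φ''(s) = ε* e^{-Φ(s)/K} for all s. Define a(t) := a₁ + a₂ t, ρ(t,x,y) := (1/a(t)²) e^{-Φ((Ax+By)/a(t))/K + C}, u(t,x,y) := (a'(t)/a(t))·(x,y), and φ(t,x,y) := Φ((Ax+By)/a(t)). Then at every point (t,x,y) with a(t) ≠ 0, the x-component of the isothermal momentum equation holds: ρ(∂u₁/∂t + u₁ ∂u₁/∂x + u₂ ∂u₁/∂y) + K ∂ρ/∂x + ρ ∂φ/∂x = 0. -/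

import Mathlib

/-- The separable ansatz with `a(t) = a₁ + a₂ t` satisfies the
x-component of the isothermal momentum equation
`ρ(∂u₁/∂t + u₁ ∂u₁/∂x + u₂ ∂u₁/∂y) + K ∂ρ/∂x + ρ ∂φ/∂x = 0`
wherever `a(t) ≠ 0`. -/
theorem momentum_equation_x_component
    (K C A B a₁ a₂ : ℝ) (hK : 0 < K) (hAB : ¬(A = 0 ∧ B = 0))
    (ε : ℝ) (hε : ε = 2 * Real.pi * Real.exp C / (A ^ 2 + B ^ 2))
    (Φ : ℝ → ℝ) (hΦ : ContDiff ℝ 2 Φ)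
    (hODE : ∀ s : ℝ, deriv (deriv Φ) s = ε * Real.exp (-Φ s / K))
    (a : ℝ → ℝ) (ha : a = fun t => a₁ + a₂ * t)
    (ρ : ℝ → ℝ → ℝ → ℝ)
    (hρ : ρ = fun t x y =>
      (1 / (a t) ^ 2) * Real.exp (-Φ ((A * x + B * y) / a t) / K + C))
    (u₁ u₂ : ℝ → ℝ → ℝ → ℝ)
    (hu₁ : u₁ = fun t x y => (deriv a t / a t) * x)
    (hu₂ : u₂ = fun t x y => (deriv a t / a t) * y)
    (φ : ℝ → ℝ → ℝ → ℝ)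
    (hφ : φ = fun t x y => Φ ((A * x + B * y) / a t)) :
    ∀ t x y : ℝ, a t ≠ 0 →
      ρ t x y * (deriv (fun t' => u₁ t' x y) t
          + u₁ t x y * deriv (fun x' => u₁ t x' y) x
          + u₂ t x y * deriv (fun y' => u₁ t x y') y)
        + K * deriv (fun x' => ρ t x' y) x
        + ρ t x y * deriv (fun x' => φ t x' y) x = 0 := by
  intro t x y hat
  have hΦd : Differentiable ℝ Φ := hΦ.differentiable two_ne_zero
  have ha' : ∀ τ : ℝ, HasDerivAt a a₂ τ := by
    intro τ; rw [ha]
    simpa using ((hasDerivAt_id τ).const_mul a₂).const_add a₁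
  have hda : deriv a = fun _ => a₂ := funext fun τ => (ha' τ).deriv
  have hu₁' : u₁ = fun t x _ => (a₂ / a t) * x := by rw [hu₁, hda]
  have hu₂' : u₂ = fun t _ y => (a₂ / a t) * y := by rw [hu₂, hda]
  set s : ℝ := (A * x + B * y) / a t with hs
  -- time derivative of u₁
  have h1 : deriv (fun t' => u₁ t' x y) t = (0 * a t - a₂ * a₂) / (a t) ^ 2 * x := by
    rw [hu₁']
    exact (((hasDerivAt_const t a₂).div (ha' t) hat).mul_const x).deriv
  -- x derivative of u₁
  have h2 : deriv (fun x' => u₁ t x' y) x = a₂ / a t * 1 := by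
    rw [hu₁']
    exact ((hasDerivAt_id x).const_mul (a₂ / a t)).deriv
  -- y derivative of u₁
  have h3 : deriv (fun y' => u₁ t x y') y = 0 := by
    rw [hu₁']; exact deriv_const y _
  -- inner function derivative
  have hin : HasDerivAt (fun x' => (A * x' + B * y) / a t) (A * 1 / a t) x :=
    (((hasDerivAt_id x).const_mul A).add_const (B * y)).div_const (a t)
  have hphi : HasDerivAt (fun x' => Φ ((A * x' + B * y) / a t))
      (deriv Φ s * (A * 1 / a t)) x := by
    exact ((hΦd s).hasDerivAt).comp x hin
  have h5 : deriv (fun x' => φ t x' y) x = deriv Φ s * (A * 1 / a t) := by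
    rw [hφ]; exact hphi.deriv
  have h4 : deriv (fun x' => ρ t x' y) x
      = (1 / (a t) ^ 2) * (Real.exp (-Φ s / K + C)
          * (-(deriv Φ s * (A * 1 / a t)) / K)) := by
    rw [hρ]
    exact ((((hphi.neg.div_const K).add_const C).exp).const_mul (1 / (a t) ^ 2)).deriv
  have hρv : ρ t x y = (1 / (a t) ^ 2) * Real.exp (-Φ s / K + C) := by rw [hρ]
  have hu₁v : u₁ t x y = a₂ / a t * x := by rw [hu₁']
  rw [h1, h2, h3, h4, h5, hρv, hu₁v]
  have hK' : K ≠ 0 := ne_of_gt hK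
  field_simp
  ring
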